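/- Let A ⊆ ℝᵐ be nonempty, let u : A → ℝᵐ be a 1-Lipschitz map, let T : ℝᵐ → ℝᵐ be an isometry, and let δ ≥ 0 satisfy ‖u(x) − T(x)‖ ≤ δ for all x ∈ A. Then there exists a 1-Lipschitz map ũ : ℝᵐ → ℝᵐ with ũ(x) = u(x) for all x ∈ A and ‖ũ(x) − T(x)‖ ≤ δ for all x ∈ ℝᵐ. -/

import Mathlib

open Finset RealInnerProductSpace

variable {E : Type*} [NormedAddCommGroup E] [InnerProductSpace ℝ E] [FiniteDimensional ℝ E]
variable {ι : Type*} [Fintype ι]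

lemma double_inner (c : ι → ℝ) (f g : ι → E) :
    ∑ i, ∑ j, (c i * c j) * ⟪f i, g j⟫ = ⟪∑ i, c i • f i, ∑ j, c j • g j⟫ := by
  rw [sum_inner]
  refine Finset.sum_congr rfl fun i _ => ?_
  rw [real_inner_smul_left, inner_sum, Finset.mul_sum]
  refine Finset.sum_congr rfl fun j _ => ?_
  rw [real_inner_smul_right]; ring

-- the (L*) inequality
lemma Lstar (c : ι → ℝ) (hc : ∀ i, 0 ≤ c i) (e w : ι → E)
    (hL : ∀ i j, ‖(e i + w i) - (e j + w j)‖ ≤ ‖e i - e j‖) :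
    2 * (∑ i, c i) * (∑ i, c i * ⟪e i, w i⟫) - 2 * ⟪∑ i, c i • e i, ∑ i, c i • w i⟫
      + (∑ i, c i) * (∑ i, c i * ‖w i‖^2) - ‖∑ i, c i • w i‖^2 ≤ 0 := by
  have key : ∀ i j, 2 * ⟪e i - e j, w i - w j⟫ + ‖w i - w j‖^2 ≤ 0 := by
    intro i j
    have h := hL i j
    have h2 : ‖(e i + w i) - (e j + w j)‖^2 ≤ ‖e i - e j‖^2 := by
      apply pow_le_pow_left₀ (norm_nonneg _) h
    have e1 : (e i + w i) - (e j + w j) = (e i - e j) + (w i - w j) := by abel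
    rw [e1, norm_add_sq_real] at h2
    nlinarith
  have hsum : ∑ i, ∑ j, (c i * c j) * (2 * ⟪e i - e j, w i - w j⟫ + ‖w i - w j‖^2) ≤ 0 := by
    apply Finset.sum_nonpos; intro i _
    apply Finset.sum_nonpos; intro j _
    exact mul_nonpos_of_nonneg_of_nonpos (mul_nonneg (hc i) (hc j)) (key i j)
  have expand : ∀ i j, (c i * c j) * (2 * ⟪e i - e j, w i - w j⟫ + ‖w i - w j‖^2)
      = 2 * ((c i * c j) * ⟪e i, w i⟫) - 2 * ((c i * c j) * ⟪e i, w j⟫)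
        - 2 * ((c i * c j) * ⟪e j, w i⟫) + 2 * ((c i * c j) * ⟪e j, w j⟫)
        + ((c i * c j) * ⟪w i, w i⟫) - 2 * ((c i * c j) * ⟪w i, w j⟫)
        + ((c i * c j) * ⟪w j, w j⟫) := by
    intro i j
    rw [← real_inner_self_eq_norm_sq]
    simp only [inner_sub_left, inner_sub_right]
    linear_combination (c i * c j) * real_inner_comm (w j) (w i)
  rw [Finset.sum_congr rfl fun i _ => Finset.sum_congr rfl fun j _ => expand i j] at hsum
  simp only [Finset.sum_sub_distrib, Finset.sum_add_distrib, ← Finset.mul_sum] at hsum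
  have hdiag : ∀ φ : ι → ℝ, ∑ i, ∑ j, (c i * c j) * φ i = (∑ i, c i * φ i) * (∑ i, c i) := by
    intro φ
    rw [Finset.sum_mul_sum]
    exact Finset.sum_congr rfl fun i _ => Finset.sum_congr rfl fun j _ => by ring
  have hdiag' : ∀ φ : ι → ℝ, ∑ i, ∑ j, (c i * c j) * φ j = (∑ i, c i) * (∑ i, c i * φ i) := by
    intro φ
    rw [Finset.sum_mul_sum]
    exact Finset.sum_congr rfl fun i _ => Finset.sum_congr rfl fun j _ => by ring
  have hA : ∑ i, ∑ j, (c i * c j) * ⟪e i, w i⟫ = (∑ i, c i * ⟪e i, w i⟫) * (∑ i, c i) :=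
    hdiag _
  have hD : ∑ i, ∑ j, (c i * c j) * ⟪e j, w j⟫ = (∑ i, c i) * (∑ i, c i * ⟪e i, w i⟫) :=
    hdiag' _
  have hE5 : ∑ i, ∑ j, (c i * c j) * ⟪w i, w i⟫ = (∑ i, c i * ‖w i‖^2) * (∑ i, c i) := by
    rw [hdiag fun i => ⟪w i, w i⟫]
    simp [real_inner_self_eq_norm_sq]
  have hG : ∑ i, ∑ j, (c i * c j) * ⟪w j, w j⟫ = (∑ i, c i) * (∑ i, c i * ‖w i‖^2) := by
    rw [hdiag' fun i => ⟪w i, w i⟫]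
    simp [real_inner_self_eq_norm_sq]
  have hB : ∑ i, ∑ j, (c i * c j) * ⟪e i, w j⟫ = ⟪∑ i, c i • e i, ∑ i, c i • w i⟫ :=
    double_inner c e w
  have hC : ∑ i, ∑ j, (c i * c j) * ⟪e j, w i⟫ = ⟪∑ i, c i • e i, ∑ i, c i • w i⟫ := by
    rw [Finset.sum_comm]
    calc ∑ j, ∑ i, (c i * c j) * ⟪e j, w i⟫
        = ∑ j, ∑ i, (c j * c i) * ⟪e j, w i⟫ :=
          Finset.sum_congr rfl fun j _ => Finset.sum_congr rfl fun i _ => by ring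
      _ = ⟪∑ i, c i • e i, ∑ i, c i • w i⟫ := double_inner c e w
  have hF : ∑ i, ∑ j, (c i * c j) * ⟪w i, w j⟫ = ‖∑ i, c i • w i‖^2 := by
    rw [double_inner c w w, real_inner_self_eq_norm_sq]
  linarith [hsum]

lemma Dcheck (c : ι → ℝ) (c₀ δ : ℝ) (hc : ∀ i, 0 ≤ c i) (hc0 : 0 ≤ c₀) (hδ : 0 ≤ δ)
    (hsum1 : (∑ i, c i) + c₀ = 1) (e w : ι → E) (hw : ∀ i, ‖w i‖ ≤ δ)
    (hL : ∀ i j, ‖(e i + w i) - (e j + w j)‖ ≤ ‖e i - e j‖) :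
    (∑ i, c i * ‖e i + w i‖^2) - ‖∑ i, c i • (e i + w i)‖^2
      ≤ (∑ i, c i * ‖e i‖^2) + c₀ * δ^2 := by
  have hsnn : 0 ≤ ∑ i, c i := Finset.sum_nonneg fun i _ => hc i
  rcases eq_or_lt_of_le hsnn with hs | hs
  · -- all c i = 0
    have hz : ∀ i ∈ Finset.univ, c i = 0 :=
      (Finset.sum_eq_zero_iff_of_nonneg fun i _ => hc i).mp hs.symm
    have hz' : ∀ i, c i = 0 := fun i => hz i (Finset.mem_univ i)
    have hc1 : c₀ = 1 := by
      have := hsum1; rw [← hs] at this; linarith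
    simp [hz', hc1]
    positivity
  · have hEW : ∑ i, c i • (e i + w i) = (∑ i, c i • e i) + (∑ i, c i • w i) := by
      simp [smul_add, Finset.sum_add_distrib]
    have hexp : ∑ i, c i * ‖e i + w i‖^2
        = (∑ i, c i * ‖e i‖^2) + 2*(∑ i, c i * ⟪e i, w i⟫) + (∑ i, c i * ‖w i‖^2) := by
      rw [Finset.mul_sum, ← Finset.sum_add_distrib, ← Finset.sum_add_distrib]
      refine Finset.sum_congr rfl fun i _ => ?_
      rw [norm_add_sq_real]; ring
    have h3 : ‖(∑ i, c i • e i) + (∑ i, c i • w i)‖^2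
        = ‖∑ i, c i • e i‖^2 + 2*⟪∑ i, c i • e i, ∑ i, c i • w i⟫ + ‖∑ i, c i • w i‖^2 :=
      norm_add_sq_real _ _
    have F1 := Lstar c hc e w hL
    have F2 : ⟪∑ i, c i • e i, ∑ i, c i • w i⟫ ≤ ‖∑ i, c i • e i‖ * ‖∑ i, c i • w i‖ :=
      real_inner_le_norm _ _
    have F3 : ‖∑ i, c i • w i‖ ≤ (∑ i, c i) * δ := by
      calc ‖∑ i, c i • w i‖ ≤ ∑ i, ‖c i • w i‖ := norm_sum_le _ _
        _ ≤ ∑ i, c i * δ := by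
            refine Finset.sum_le_sum fun i _ => ?_
            rw [norm_smul, Real.norm_eq_abs, abs_of_nonneg (hc i)]
            exact mul_le_mul_of_nonneg_left (hw i) (hc i)
        _ = (∑ i, c i) * δ := by rw [Finset.sum_mul]
    set s := ∑ i, c i with hsdef
    set SA := ∑ i, c i * ⟪e i, w i⟫ with hSA
    set SN := ∑ i, c i * ‖w i‖^2 with hSN
    set nE := ‖∑ i, c i • e i‖ with hnE
    set nW := ‖∑ i, c i • w i‖ with hnW
    set I := ⟪∑ i, c i • e i, ∑ i, c i • w i⟫ with hI
    have hnEnn : 0 ≤ nE := norm_nonneg _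
    have hnWnn : 0 ≤ nW := norm_nonneg _
    rw [hEW, hexp, h3]
    have p1 : 0 ≤ c₀ * (nE * nW - I) := mul_nonneg hc0 (by linarith)
    have p2 : 0 ≤ c₀ * nE * (s * δ - nW) := by
      apply mul_nonneg (mul_nonneg hc0 hnEnn); linarith
    have p3 : 0 ≤ c₀ * ((s * δ + nW) * (s * δ - nW)) := by
      apply mul_nonneg hc0
      apply mul_nonneg (by positivity) (by linarith)
    have p4 : 0 ≤ s * (nE - c₀*δ)^2 := by positivity
    have hc0eq : c₀ = 1 - s := by linarith
    have key : s * ((∑ i, c i * ‖e i‖^2) + 2*SA + SN - (nE^2 + 2*I + nW^2))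
        ≤ s * ((∑ i, c i * ‖e i‖^2) + c₀ * δ^2) := by
      rw [hc0eq]
      rw [hc0eq] at p1 p2 p3 p4
      linarith [F1, p1, p2, p3, p4]
    have := (mul_le_mul_iff_right₀ hs).mp key
    linarith



lemma ballIntersect (y : ι → E) (r : ι → ℝ) (hr : ∀ i, 0 ≤ r i)
    (hyp : ∀ c : ι → ℝ, (∀ i, 0 ≤ c i) → (∑ i, c i) = 1 →
      (∑ i, c i * ‖y i‖^2) - ‖∑ i, c i • y i‖^2 ≤ ∑ i, c i * (r i)^2) :
    ∃ p : E, ∀ i, ‖p - y i‖ ≤ r i := by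
  classical
  cases isEmpty_or_nonempty ι with
  | inl h => exact ⟨0, fun i => h.elim i⟩
  | inr hne =>
  set f : ι → E → ℝ := fun i p => ‖p - y i‖^2 - (r i)^2 with hf
  set g : E → ℝ := fun p => univ.sup' univ_nonempty (fun i => f i p) with hg
  have hgle : ∀ p i, f i p ≤ g p := fun p i => Finset.le_sup' (fun j => f j p) (mem_univ i)
  have hcont : Continuous g := by
    rw [continuous_iff_continuousAt]
    intro p
    apply Filter.Tendsto.finset_sup'_nhds_apply
    intro i _
    exact ((((continuous_id.sub continuous_const).norm).pow 2).sub continuous_const).continuousAt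
  obtain ⟨i₀⟩ := id hne
  set M : ℝ := max 0 (g 0 + (r i₀)^2) with hM
  set R : ℝ := ‖y i₀‖ + Real.sqrt M + 1 with hR
  have hR0 : 0 ≤ R := by positivity
  obtain ⟨p, hpball, hpmin⟩ := (isCompact_closedBall (0:E) R).exists_isMinOn
    ⟨0, Metric.mem_closedBall_self hR0⟩ hcont.continuousOn
  have hg0 : g p ≤ g 0 := hpmin (Metric.mem_closedBall_self hR0)
  have hglobal : ∀ q, g p ≤ g q := by
    intro q
    by_cases hq : q ∈ Metric.closedBall (0:E) R
    · exact hpmin hq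
    · have hq' : R < ‖q‖ := by
        simpa [Metric.mem_closedBall, dist_zero_right] using hq
      have h1 : ‖q‖ - ‖y i₀‖ ≤ ‖q - y i₀‖ := by
        have := norm_sub_norm_le q (y i₀); linarith [le_abs_self (‖q‖ - ‖y i₀‖)]
      have h2 : Real.sqrt M + 1 ≤ ‖q - y i₀‖ := by linarith
      have h3 : (Real.sqrt M + 1)^2 ≤ ‖q - y i₀‖^2 := by
        apply pow_le_pow_left₀ (by positivity) h2
      have h4 : M ≤ (Real.sqrt M)^2 := by
        rw [Real.sq_sqrt (le_max_left _ _)]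
      have h5 : g 0 + (r i₀)^2 ≤ M := le_max_right _ _
      have h6 : g 0 < f i₀ q := by
        simp only [hf]
        nlinarith [Real.sqrt_nonneg M]
      exact le_trans hg0 (le_trans h6.le (hgle q i₀))
  rcases le_or_gt (g p) 0 with hmu | hmu
  · refine ⟨p, fun i => ?_⟩
    have h1 : f i p ≤ 0 := le_trans (hgle p i) hmu
    have h2 : ‖p - y i‖^2 ≤ (r i)^2 := by simp only [hf] at h1; linarith
    exact (pow_le_pow_iff_left₀ (norm_nonneg _) (hr i) two_ne_zero).mp h2
  · exfalso
    set μ := g p with hμ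
    set Ia : Finset ι := univ.filter (fun i => f i p = μ) with hIa
    set K : Set E := convexHull ℝ (↑(Ia.image y) : Set E) with hK
    have hKconv : Convex ℝ K := convex_convexHull ℝ _
    -- p ∈ K
    have hpK : p ∈ K := by
      by_contra hpK
      obtain ⟨ia, hia_mem, hia⟩ := Finset.exists_mem_eq_sup' univ_nonempty (fun i => f i p)
      have hiaIa : ia ∈ Ia := Finset.mem_filter.mpr ⟨Finset.mem_univ _, hia.symm⟩
      have hKne : K.Nonempty :=
        ⟨y ia, subset_convexHull ℝ _ (Finset.mem_coe.mpr (Finset.mem_image_of_mem y hiaIa))⟩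
      have hKcomp : IsCompact K := by
        rw [hK]; exact (Ia.image y).finite_toSet.isCompact_convexHull (𝕜 := ℝ)
      obtain ⟨q, hqK, hqmin⟩ := exists_norm_eq_iInf_of_complete_convex hKne
        (hKcomp.isClosed.isComplete) hKconv p
      have hproj : ∀ z ∈ K, ⟪p - q, z - q⟫ ≤ 0 :=
        (norm_eq_iInf_iff_real_inner_le_zero hKconv hqK).mp hqmin
      set d : E := q - p with hd
      have hdne : d ≠ 0 := by
        intro h0
        apply hpK
        have hpq : q = p := sub_eq_zero.mp h0
        rw [← hpq]; exact hqK
      have hdpos : 0 < ‖d‖ := norm_pos_iff.mpr hdne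
      -- inner product bound for active indices
      have hactive : ∀ i ∈ Ia, ⟪p - y i, d⟫ ≤ -‖d‖^2 := by
        intro i hi
        have hyiK : y i ∈ K := by
          apply subset_convexHull ℝ _
          simp only [Finset.coe_image, Set.mem_image, Finset.mem_coe]
          exact ⟨i, hi, rfl⟩
        have h1 : ⟪p - q, y i - q⟫ ≤ 0 := hproj _ hyiK
        have e1 : p - y i = (p - q) + (q - y i) := by abel
        rw [e1, inner_add_left]
        have e2 : ⟪p - q, d⟫ = -‖d‖^2 := by
          rw [show d = -(p - q) by rw [hd]; abel, inner_neg_right,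
            real_inner_self_eq_norm_sq, norm_neg]
        have e3 : ⟪q - y i, d⟫ ≤ 0 := by
          calc ⟪q - y i, d⟫ = ⟪p - q, y i - q⟫ := by
                rw [show q - y i = -(y i - q) by abel, show d = -(p - q) by rw [hd]; abel,
                  inner_neg_neg, real_inner_comm]
            _ ≤ 0 := h1
        linarith
      -- perturbation
      set C : ι → ℝ := fun i => 2*⟪p - y i, d⟫ + ‖d‖^2 with hC
      set εf : ι → ℝ := fun i => if i ∈ Ia then 1 else min 1 ((μ - f i p)/(|C i| + 1)) with hεf
      have hfi_lt : ∀ i, i ∉ Ia → f i p < μ := by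
        intro i hi
        rcases lt_or_eq_of_le (hgle p i) with h | h
        · exact h
        · exact absurd (Finset.mem_filter.mpr ⟨Finset.mem_univ i, h⟩) hi
      have hεpos : ∀ i, 0 < εf i := by
        intro i
        by_cases hi : i ∈ Ia
        · simp only [hεf, hi, if_true]; exact one_pos
        · simp only [hεf, hi, if_false]
          exact lt_min one_pos (div_pos (by linarith [hfi_lt i hi]) (by positivity))
      set ε : ℝ := univ.inf' univ_nonempty εf with hε
      have hεp : 0 < ε := by
        rw [hε, Finset.lt_inf'_iff]
        exact fun i _ => hεpos i
      have hε1 : ε ≤ 1 := by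
        refine le_trans (Finset.inf'_le εf (Finset.mem_univ i₀)) ?_
        by_cases hi : i₀ ∈ Ia
        · simp only [hεf, hi, if_true]; exact le_refl 1
        · simp only [hεf, hi, if_false]; exact min_le_left _ _
      have hexpand : ∀ i, f i (p + ε • d) = f i p + 2*ε*⟪p - y i, d⟫ + ε^2*‖d‖^2 := by
        intro i
        simp only [hf]
        have e1 : p + ε • d - y i = (p - y i) + ε • d := by abel
        rw [e1, norm_add_sq_real, real_inner_smul_right, norm_smul, Real.norm_eq_abs,
          abs_of_pos hεp, mul_pow]
        ring
      have claim : ∀ i, f i (p + ε • d) < μ := by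
        intro i
        rw [hexpand i]
        by_cases hi : i ∈ Ia
        · have h1 : ⟪p - y i, d⟫ ≤ -‖d‖^2 := hactive i hi
          have h2 : f i p = μ := (Finset.mem_filter.mp hi).2
          nlinarith [mul_le_mul_of_nonneg_left h1 hεp.le, mul_pos hεp (pow_pos hdpos 2),
            mul_nonneg (mul_nonneg (sub_nonneg.mpr hε1) hεp.le) (sq_nonneg ‖d‖)]
        · have h1 : f i p < μ := hfi_lt i hi
          have h2 : ε ≤ (μ - f i p)/(|C i| + 1) := by
            refine le_trans (Finset.inf'_le εf (Finset.mem_univ i)) ?_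
            simp only [hεf, hi, if_false]
            exact min_le_right _ _
          have h3 : ε * (|C i| + 1) ≤ μ - f i p := by
            rw [← le_div_iff₀ (by positivity)]; exact h2
          have h4 : C i ≤ |C i| := le_abs_self _
          have h5 : 2*ε*⟪p - y i, d⟫ + ε^2*‖d‖^2 ≤ ε * C i := by
            simp only [hC]
            nlinarith [mul_nonneg (mul_nonneg (sub_nonneg.mpr hε1) hεp.le) (sq_nonneg ‖d‖)]
          nlinarith [mul_le_mul_of_nonneg_left h4 hεp.le, hεp]
      have hlt : g (p + ε • d) < μ := by
        rw [hg, Finset.sup'_lt_iff]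
        exact fun i _ => claim i
      exact absurd (hglobal (p + ε • d)) (not_le.mpr hlt)
    -- representation of p as convex combination of active centers
    rw [hK, Finset.convexHull_eq] at hpK
    obtain ⟨wt, hwt0, hwt1, hwtc⟩ := hpK
    have hcm : ∑ z ∈ Ia.image y, wt z • z = p := by
      rw [Finset.centerMass_eq_of_sum_1 _ id hwt1] at hwtc
      simpa using hwtc
    set rep : E → ι := fun z => if h : ∃ i, i ∈ Ia ∧ y i = z then h.choose else i₀ with hrep
    have hrep_spec : ∀ z ∈ Ia.image y, rep z ∈ Ia ∧ y (rep z) = z := by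
      intro z hz
      obtain ⟨i, hi, hyi⟩ := Finset.mem_image.mp hz
      have hex : ∃ j, j ∈ Ia ∧ y j = z := ⟨i, hi, hyi⟩
      simp only [hrep, dif_pos hex]
      exact hex.choose_spec
    set c : ι → ℝ := fun i => ∑ z ∈ (Ia.image y).filter (fun z => rep z = i), wt z with hc
    have hc0 : ∀ i, 0 ≤ c i := fun i =>
      Finset.sum_nonneg fun z hz => hwt0 z (Finset.mem_filter.mp hz).1
    have hmaps : ∀ z ∈ Ia.image y, rep z ∈ (univ : Finset ι) := fun z _ => Finset.mem_univ _
    have hcsum : ∑ i, c i = 1 := by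
      rw [hc]
      rw [Finset.sum_fiberwise_of_maps_to hmaps wt]
      exact hwt1
    have hcsmul : ∑ i, c i • y i = p := by
      have step1 : ∀ i, c i • y i = ∑ z ∈ (Ia.image y).filter (fun z => rep z = i), wt z • z := by
        intro i
        rw [hc, Finset.sum_smul]
        refine Finset.sum_congr rfl fun z hz => ?_
        obtain ⟨hz1, hz2⟩ := Finset.mem_filter.mp hz
        rw [← hz2, (hrep_spec z hz1).2]
      calc ∑ i, c i • y i = ∑ i, ∑ z ∈ (Ia.image y).filter (fun z => rep z = i), wt z • z :=
            Finset.sum_congr rfl fun i _ => step1 i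
        _ = ∑ z ∈ Ia.image y, wt z • z := Finset.sum_fiberwise_of_maps_to hmaps _
        _ = p := hcm
    have hsupp : ∀ i, c i ≠ 0 → f i p = μ := by
      intro i hci
      obtain ⟨z, hz, hwz⟩ := Finset.exists_ne_zero_of_sum_ne_zero hci
      obtain ⟨hz1, hz2⟩ := Finset.mem_filter.mp hz
      have := (hrep_spec z hz1).1
      rw [hz2] at this
      exact (Finset.mem_filter.mp this).2
    have h1 := hyp c hc0 hcsum
    rw [hcsmul] at h1
    have hip : ∑ i, c i * ⟪p, y i⟫ = ‖p‖^2 := by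
      have : ⟪p, ∑ i, c i • y i⟫ = ∑ i, c i * ⟪p, y i⟫ := by
        rw [inner_sum]
        exact Finset.sum_congr rfl fun i _ => real_inner_smul_right _ _ _
      rw [hcsmul] at this
      rw [← this, real_inner_self_eq_norm_sq]
    have h2 : ∑ i, c i * ‖p - y i‖^2 = (∑ i, c i * ‖y i‖^2) - ‖p‖^2 := by
      have expand : ∀ i, c i * ‖p - y i‖^2
          = c i * ‖p‖^2 - 2*(c i * ⟪p, y i⟫) + c i * ‖y i‖^2 := by
        intro i; rw [norm_sub_sq_real]; ring
      calc ∑ i, c i * ‖p - y i‖^2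
          = ∑ i, (c i * ‖p‖^2 - 2*(c i * ⟪p, y i⟫) + c i * ‖y i‖^2) :=
            Finset.sum_congr rfl fun i _ => expand i
        _ = (∑ i, c i) * ‖p‖^2 - 2*(∑ i, c i * ⟪p, y i⟫) + ∑ i, c i * ‖y i‖^2 := by
            rw [Finset.sum_add_distrib, Finset.sum_sub_distrib, ← Finset.sum_mul,
              ← Finset.mul_sum]
        _ = (∑ i, c i * ‖y i‖^2) - ‖p‖^2 := by rw [hcsum, hip]; ring
    have h3 : ∑ i, c i * (‖p - y i‖^2 - (r i)^2) = μ := by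
      have : ∀ i, c i * (‖p - y i‖^2 - (r i)^2) = c i * μ := by
        intro i
        rcases eq_or_ne (c i) 0 with h | h
        · rw [h]; ring
        · have := hsupp i h
          simp only [hf] at this
          rw [this]
      calc ∑ i, c i * (‖p - y i‖^2 - (r i)^2) = ∑ i, c i * μ :=
            Finset.sum_congr rfl fun i _ => this i
        _ = μ := by rw [← Finset.sum_mul, hcsum, one_mul]
    simp only [mul_sub] at h3
    rw [Finset.sum_sub_distrib] at h3
    linarith [h3, h1, h2, hmu]
lemma finiteBalls (e w : ι → E) (δ : ℝ) (hδ : 0 ≤ δ) (hw : ∀ i, ‖w i‖ ≤ δ)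
    (hL : ∀ i j, ‖(e i + w i) - (e j + w j)‖ ≤ ‖e i - e j‖) :
    ∃ p : E, ‖p‖ ≤ δ ∧ ∀ i, ‖p - (e i + w i)‖ ≤ ‖e i‖ := by
  set y : Option ι → E := fun o => o.elim 0 (fun i => e i + w i) with hy
  set r : Option ι → ℝ := fun o => o.elim δ (fun i => ‖e i‖) with hr
  have hr0 : ∀ o, 0 ≤ r o := by rintro (_|i); exacts [hδ, norm_nonneg _]
  have hyp : ∀ c : Option ι → ℝ, (∀ o, 0 ≤ c o) → (∑ o, c o) = 1 →
      (∑ o, c o * ‖y o‖^2) - ‖∑ o, c o • y o‖^2 ≤ ∑ o, c o * (r o)^2 := by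
    intro c hc hcsum
    rw [Fintype.sum_option] at hcsum
    have h := Dcheck (fun i => c (some i)) (c none) δ (fun i => hc _) (hc _) hδ
      (by linarith) e w hw hL
    rw [Fintype.sum_option, Fintype.sum_option, Fintype.sum_option]
    simp only [hy, hr, Option.elim]
    simp only [norm_zero, smul_zero, zero_add]
    calc c none * 0^2 + ∑ i, c (some i) * ‖e i + w i‖^2
          - ‖∑ i, c (some i) • (e i + w i)‖^2
        = (∑ i, c (some i) * ‖e i + w i‖^2) - ‖∑ i, c (some i) • (e i + w i)‖^2 := by ring_nf
      _ ≤ (∑ i, c (some i) * ‖e i‖^2) + c none * δ^2 := h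
      _ = c none * δ^2 + ∑ i, c (some i) * ‖e i‖^2 := by ring
  obtain ⟨p, hp⟩ := ballIntersect y r hr0 hyp
  refine ⟨p, ?_, fun i => ?_⟩
  · have := hp none
    simp only [hy, hr, Option.elim] at this
    simpa using this
  · have := hp (some i)
    simp only [hy, hr, Option.elim] at this
    exact this

lemma onePoint (B : Set E) (v T : E → E) (δ : ℝ) (hδ : 0 ≤ δ)
    (hT : ∀ x y : E, ‖T x - T y‖ = ‖x - y‖)
    (hv1 : ∀ x ∈ B, ∀ y ∈ B, ‖v x - v y‖ ≤ ‖x - y‖)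
    (hv2 : ∀ x ∈ B, ‖v x - T x‖ ≤ δ) (x₀ : E) :
    ∃ p : E, (∀ b ∈ B, ‖p - v b‖ ≤ ‖x₀ - b‖) ∧ ‖p - T x₀‖ ≤ δ := by
  classical
  set K : Set E := Metric.closedBall (T x₀) δ with hK
  set Z : ↥B → Set E := fun b => Metric.closedBall (v b) ‖x₀ - (b : E)‖ with hZ
  have hKcomp : IsCompact K := isCompact_closedBall _ _
  have hZclosed : ∀ b : ↥B, IsClosed (Z b) := fun b => Metric.isClosed_closedBall
  have hne : (K ∩ ⋂ b : ↥B, Z b).Nonempty := by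
    by_contra hcon
    rw [Set.not_nonempty_iff_eq_empty] at hcon
    obtain ⟨t, ht⟩ := hKcomp.elim_finite_subfamily_closed Z hZclosed hcon
    -- build a point in the finite intersection
    set e : ↥t → E := fun i => T ((i : ↥B) : E) - T x₀ with he
    set w : ↥t → E := fun i => v ((i : ↥B) : E) - T ((i : ↥B) : E) with hw
    have hwb : ∀ i, ‖w i‖ ≤ δ := fun i => hv2 _ ((i : ↥B)).2
    have hLb : ∀ i j, ‖(e i + w i) - (e j + w j)‖ ≤ ‖e i - e j‖ := by
      intro i j
      have e1 : (e i + w i) - (e j + w j)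
          = v ((i : ↥B) : E) - v ((j : ↥B) : E) := by simp only [he, hw]; abel
      have e2 : e i - e j = T ((i : ↥B) : E) - T ((j : ↥B) : E) := by
        simp only [he]; abel
      rw [e1, e2, hT]
      exact hv1 _ ((i : ↥B)).2 _ ((j : ↥B)).2
    obtain ⟨p, hp1, hp2⟩ := finiteBalls e w δ hδ hwb hLb
    have hmem : T x₀ + p ∈ K ∩ ⋂ b ∈ t, Z b := by
      constructor
      · rw [hK, Metric.mem_closedBall, dist_eq_norm]
        simpa using hp1
      · rw [Set.mem_iInter₂]
        intro b hb
        rw [hZ, Metric.mem_closedBall, dist_eq_norm]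
        have := hp2 ⟨b, hb⟩
        have e3 : T x₀ + p - v (b : E) = p - (e ⟨b, hb⟩ + w ⟨b, hb⟩) := by
          simp only [he, hw]; abel
        have e4 : ‖e ⟨b, hb⟩‖ = ‖x₀ - (b : E)‖ := by
          rw [he]; simp only []
          rw [show ‖T ((b:E)) - T x₀‖ = ‖(b:E) - x₀‖ from hT _ _, norm_sub_rev]
        rw [e3]
        rw [← e4]
        exact this
    rw [ht] at hmem
    exact hmem
  obtain ⟨p, hpK, hpZ⟩ := hne
  refine ⟨p, fun b hb => ?_, ?_⟩
  · have := Set.mem_iInter.mp hpZ ⟨b, hb⟩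
    rw [hZ] at this
    rw [Metric.mem_closedBall, dist_eq_norm] at this
    exact this
  · rw [hK, Metric.mem_closedBall, dist_eq_norm] at hpK
    exact hpK

lemma finsetExtend (A : Set E) (u T : E → E) (δ : ℝ) (hδ : 0 ≤ δ)
    (hu : ∀ x ∈ A, ∀ y ∈ A, ‖u x - u y‖ ≤ ‖x - y‖)
    (hT : ∀ x y : E, ‖T x - T y‖ = ‖x - y‖)
    (hclose : ∀ x ∈ A, ‖u x - T x‖ ≤ δ) (P : Finset E) :
    ∃ v : E → E, (∀ a ∈ A, v a = u a)
      ∧ (∀ x ∈ A ∪ ↑P, ∀ y ∈ A ∪ ↑P, ‖v x - v y‖ ≤ ‖x - y‖)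
      ∧ (∀ x ∈ A ∪ ↑P, ‖v x - T x‖ ≤ δ) := by
  classical
  induction P using Finset.induction_on with
  | empty =>
    refine ⟨u, fun a _ => rfl, ?_, ?_⟩ <;> simp only [Finset.coe_empty, Set.union_empty]
    · exact hu
    · exact hclose
  | @insert x₀ P hx₀ ih =>
    obtain ⟨v, hv1, hv2, hv3⟩ := ih
    have hset : A ∪ ↑(insert x₀ P) = insert x₀ (A ∪ ↑P) := by
      rw [Finset.coe_insert, Set.union_insert]
    by_cases hmem : x₀ ∈ A ∪ ↑P
    · refine ⟨v, hv1, ?_, ?_⟩ <;> rw [hset, Set.insert_eq_of_mem hmem]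
      · exact hv2
      · exact hv3
    · obtain ⟨p, hp1, hp2⟩ := onePoint (A ∪ ↑P) v T δ hδ hT hv2 hv3 x₀
      refine ⟨Function.update v x₀ p, ?_, ?_, ?_⟩
      · intro a ha
        have hne : a ≠ x₀ := fun h => hmem (h ▸ Set.mem_union_left _ ha)
        rw [Function.update_of_ne hne]
        exact hv1 a ha
      · intro x hx y hy
        rw [hset] at hx hy
        rcases hx with hx | hx <;> rcases hy with hy | hy
      -- both x₀
        · rw [hx, hy]; simp
        · rw [hx]
          have hne : y ≠ x₀ := fun h => hmem (h ▸ hy)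
          rw [Function.update_self, Function.update_of_ne hne]
          exact hp1 y hy
        · rw [hy]
          have hne : x ≠ x₀ := fun h => hmem (h ▸ hx)
          rw [Function.update_self, Function.update_of_ne hne]
          rw [norm_sub_rev, norm_sub_rev x x₀]
          exact hp1 x hx
        · have hnex : x ≠ x₀ := fun h => hmem (h ▸ hx)
          have hney : y ≠ x₀ := fun h => hmem (h ▸ hy)
          rw [Function.update_of_ne hnex, Function.update_of_ne hney]
          exact hv2 x hx y hy
      · intro x hx
        rw [hset] at hx
        rcases hx with hx | hx
        · rw [hx, Function.update_self]
          exact hp2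
        · have hne : x ≠ x₀ := fun h => hmem (h ▸ hx)
          rw [Function.update_of_ne hne]
          exact hv3 x hx

theorem stmt_19 (m : ℕ) (A : Set (EuclideanSpace ℝ (Fin m))) (hA : A.Nonempty)
    (u : EuclideanSpace ℝ (Fin m) → EuclideanSpace ℝ (Fin m))
    (hu : ∀ x ∈ A, ∀ y ∈ A, ‖u x - u y‖ ≤ ‖x - y‖)
    (T : EuclideanSpace ℝ (Fin m) → EuclideanSpace ℝ (Fin m))
    (hT : ∀ x y : EuclideanSpace ℝ (Fin m), ‖T x - T y‖ = ‖x - y‖)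
    (δ : ℝ) (hδ : 0 ≤ δ) (hclose : ∀ x ∈ A, ‖u x - T x‖ ≤ δ) :
    ∃ uext : EuclideanSpace ℝ (Fin m) → EuclideanSpace ℝ (Fin m),
      (∀ x y : EuclideanSpace ℝ (Fin m), ‖uext x - uext y‖ ≤ ‖x - y‖) ∧
      (∀ x ∈ A, uext x = u x) ∧
      (∀ x : EuclideanSpace ℝ (Fin m), ‖uext x - T x‖ ≤ δ) := by
  classical
  set K : Set ((EuclideanSpace ℝ (Fin m)) → (EuclideanSpace ℝ (Fin m))) := Set.pi Set.univ (fun x => Metric.closedBall (T x) δ) with hK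
  have hKcomp : IsCompact K := isCompact_univ_pi fun x => isCompact_closedBall _ _
  set C : ((EuclideanSpace ℝ (Fin m)) × (EuclideanSpace ℝ (Fin m))) ⊕ ↥A → Set ((EuclideanSpace ℝ (Fin m)) → (EuclideanSpace ℝ (Fin m))) := fun i =>
    Sum.elim (fun xy : (EuclideanSpace ℝ (Fin m)) × (EuclideanSpace ℝ (Fin m)) => {f : (EuclideanSpace ℝ (Fin m)) → (EuclideanSpace ℝ (Fin m)) | ‖f xy.1 - f xy.2‖ ≤ ‖xy.1 - xy.2‖})
      (fun a : ↥A => {f : (EuclideanSpace ℝ (Fin m)) → (EuclideanSpace ℝ (Fin m)) | f (a : (EuclideanSpace ℝ (Fin m))) = u (a : (EuclideanSpace ℝ (Fin m)))}) i with hC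
  have hCclosed : ∀ i, IsClosed (C i) := by
    rintro (⟨x, y⟩ | a)
    · have : C (Sum.inl (x, y)) = (fun f : (EuclideanSpace ℝ (Fin m)) → (EuclideanSpace ℝ (Fin m)) => ‖f x - f y‖) ⁻¹' Set.Iic ‖x - y‖ := rfl
      rw [this]
      exact IsClosed.preimage (((continuous_apply x).sub (continuous_apply y)).norm) isClosed_Iic
    · exact isClosed_eq (continuous_apply _) continuous_const
  have hfin : ∀ t : Finset (((EuclideanSpace ℝ (Fin m)) × (EuclideanSpace ℝ (Fin m))) ⊕ ↥A), (K ∩ ⋂ i ∈ t, C i).Nonempty := by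
    intro t
    set P : Finset (EuclideanSpace ℝ (Fin m)) := t.biUnion (fun i =>
      Sum.elim (fun xy : (EuclideanSpace ℝ (Fin m)) × (EuclideanSpace ℝ (Fin m)) => ({xy.1, xy.2} : Finset (EuclideanSpace ℝ (Fin m)))) (fun _ => ∅) i) with hP
    obtain ⟨v, hv1, hv2, hv3⟩ := finsetExtend A u T δ hδ hu hT hclose P
    refine ⟨fun x => if x ∈ A ∪ ↑P then v x else T x, ?_, ?_⟩
    · rw [hK, Set.mem_univ_pi]
      intro x
      by_cases hx : x ∈ A ∪ ↑P
      · rw [if_pos hx, Metric.mem_closedBall, dist_eq_norm]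
        exact hv3 x hx
      · rw [if_neg hx, Metric.mem_closedBall, dist_self]
        exact hδ
    · rw [Set.mem_iInter₂]
      rintro (⟨x, y⟩ | a) hi
      · have hxP : x ∈ P := Finset.mem_biUnion.mpr ⟨Sum.inl (x, y), hi, by simp⟩
        have hyP : y ∈ P := Finset.mem_biUnion.mpr ⟨Sum.inl (x, y), hi, by simp⟩
        have hx : x ∈ A ∪ ↑P := Set.mem_union_right _ (Finset.mem_coe.mpr hxP)
        have hy : y ∈ A ∪ ↑P := Set.mem_union_right _ (Finset.mem_coe.mpr hyP)
        simp only [hC, Sum.elim_inl, Set.mem_setOf_eq]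
        rw [if_pos hx, if_pos hy]
        exact hv2 x hx y hy
      · have ha : (a : (EuclideanSpace ℝ (Fin m))) ∈ A ∪ ↑P := Set.mem_union_left _ a.2
        simp only [hC, Sum.elim_inr, Set.mem_setOf_eq]
        rw [if_pos ha]
        exact hv1 _ a.2
  have hne : (K ∩ ⋂ i, C i).Nonempty := by
    by_contra hcon
    rw [Set.not_nonempty_iff_eq_empty] at hcon
    obtain ⟨t, ht⟩ := hKcomp.elim_finite_subfamily_closed C hCclosed hcon
    exact absurd ht (Set.nonempty_iff_ne_empty.mp (hfin t))
  obtain ⟨f, hfK, hfC⟩ := hne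
  refine ⟨f, ?_, ?_, ?_⟩
  · intro x y
    exact Set.mem_iInter.mp hfC (Sum.inl (x, y))
  · intro a ha
    exact Set.mem_iInter.mp hfC (Sum.inr ⟨a, ha⟩)
  · intro x
    rw [hK, Set.mem_univ_pi] at hfK
    have := hfK x
    rw [Metric.mem_closedBall, dist_eq_norm] at this
    exact this
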